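/- Fix m ≥ 2 and k = (k_0, k_1, ...). Let n ≥ 1 and let N be any integer with m^{N+1} > n. Then the number c_m^k(n) of k-coloured m-ary partitions of n without gaps equals the coefficient of q^n in the formal power series ∑_{i=0}^{N} ∏_{j=0}^{i} (G_{m^j}^{k_j} - 1) ∈ ℤ⟦q⟧, where G_r = ∑_{ℓ≥0} q^{rℓ} is the inverse of 1 - q^r in ℤ⟦q⟧. -/

import Mathlib

open PowerSeries Finset

/-- A `k`-coloured `m`-ary partition of `n`: a finitely supported function
`c : ℕ × ℕ →₀ ℕ`, where `c (j, i)` is the multiplicity of the part `m^j` in colour `i`,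
with `c (j, i) = 0` whenever `i ≥ k j`, and total sum `∑ c (j, i) · m^j = n`. -/
def IsColouredMaryPartition (m : ℕ) (k : ℕ → ℕ) (n : ℕ) (c : ℕ × ℕ →₀ ℕ) : Prop :=
  (∀ j i, k j ≤ i → c (j, i) = 0) ∧ c.sum (fun p v => v * m ^ p.1) = n

/-- A coloured `m`-ary partition is *without gaps* if whenever a part `m^{j+1}` occurs
in some colour, a part `m^j` occurs in some (not necessarily the same) colour. -/
def WithoutGaps (c : ℕ × ℕ →₀ ℕ) : Prop :=
  ∀ j : ℕ, (∃ i, 0 < c (j + 1, i)) → ∃ i', 0 < c (j, i')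

namespace GapfreeAux

open Finsupp

noncomputable section

/-! ### Coefficients of `G r` and of products -/

lemma coeffG (G : ℕ → PowerSeries ℤ) (hG : ∀ r, 1 ≤ r → (1 - X ^ r) * G r = 1)
    (r : ℕ) (hr : 1 ≤ r) (d : ℕ) :
    PowerSeries.coeff (R := ℤ) d (G r) = if r ∣ d then 1 else 0 := by
  induction d using Nat.strong_induction_on with
  | _ d ih =>
    have h := congrArg (PowerSeries.coeff (R := ℤ) d) (hG r hr)
    rw [sub_mul, one_mul, map_sub, PowerSeries.coeff_one,
      show (X : PowerSeries ℤ) ^ r * G r = G r * X ^ r from mul_comm _ _,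
      PowerSeries.coeff_mul_X_pow'] at h
    by_cases hd : r ≤ d
    · have hd0 : d ≠ 0 := by omega
      rw [if_pos hd, if_neg hd0, sub_eq_zero] at h
      rw [h, ih (d - r) (by omega)]
      have : r ∣ d - r ↔ r ∣ d := by
        constructor
        · intro hdvd
          have := Nat.dvd_add hdvd (dvd_refl r)
          rwa [Nat.sub_add_cancel hd] at this
        · intro hdvd; exact Nat.dvd_sub hdvd (dvd_refl r)
      simp [this]
    · rw [if_neg hd, sub_zero] at h
      by_cases hd0 : d = 0
      · subst hd0
        simp only [if_pos rfl] at h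
        simp [h]
      · rw [if_neg hd0] at h
        rw [h, if_neg]
        intro hdvd
        exact hd (Nat.le_of_dvd (by omega) hdvd)

lemma coeff_G_pow (Gr : PowerSeries ℤ) (r : ℕ)
    (hcoeff : ∀ d, PowerSeries.coeff (R := ℤ) d Gr = if r ∣ d then 1 else 0) (k' d : ℕ) :
    PowerSeries.coeff (R := ℤ) d (Gr ^ k') =
      ((((range k').finsuppAntidiag d)).filter (fun a => ∀ t ∈ range k', r ∣ a t)).card := by
  have hpow : Gr ^ k' = ∏ _t ∈ range k', Gr := by
    rw [Finset.prod_const, Finset.card_range]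
  rw [hpow, PowerSeries.coeff_prod]
  have : ∀ l ∈ (range k').finsuppAntidiag d,
      (∏ t ∈ range k', PowerSeries.coeff (R := ℤ) (l t) Gr)
        = if (∀ t ∈ range k', r ∣ l t) then (1 : ℤ) else 0 := by
    intro l _
    rw [Finset.prod_congr rfl (fun t _ => hcoeff (l t))]
    exact Finset.prod_boole
  rw [Finset.sum_congr rfl this, Finset.sum_boole]


/-- The finset counting colour-rows at a given level: finsupps `a` supported in
`range k'` with total `d`, each value divisible by `r`, and not identically zero. -/
def Cset (r k' d : ℕ) : Finset (ℕ →₀ ℕ) :=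
  ((range k').finsuppAntidiag d).filter (fun a => (∀ t ∈ range k', r ∣ a t) ∧ a ≠ 0)

lemma coeff_F (Gr : PowerSeries ℤ) (r : ℕ)
    (hcoeff : ∀ d, PowerSeries.coeff (R := ℤ) d Gr = if r ∣ d then 1 else 0) (k' d : ℕ) :
    PowerSeries.coeff (R := ℤ) d (Gr ^ k' - 1) = (Cset r k' d).card := by
  rw [map_sub, coeff_G_pow Gr r hcoeff, PowerSeries.coeff_one, Cset]
  by_cases hd : d = 0
  · subst hd
    have h1 : (((range k').finsuppAntidiag 0)).filter (fun a => ∀ t ∈ range k', r ∣ a t)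
        = {0} := by
      ext a
      simp only [Finset.mem_filter, Finset.mem_finsuppAntidiag, Finset.mem_singleton]
      constructor
      · rintro ⟨⟨hsum, hsupp⟩, _⟩
        ext t
        by_cases ht : t ∈ range k'
        · exact Finset.sum_eq_zero_iff.mp hsum t ht
        · by_contra h0
          exact ht (hsupp (Finsupp.mem_support_iff.mpr h0))
      · rintro rfl
        refine ⟨⟨Finset.sum_const_zero, by simp⟩, fun t _ => dvd_zero r⟩
    have h2 : ((range k').finsuppAntidiag 0).filter
        (fun a => (∀ t ∈ range k', r ∣ a t) ∧ a ≠ 0) = ∅ := by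
      rw [Finset.eq_empty_iff_forall_notMem]
      intro a ha
      rw [Finset.mem_filter] at ha
      have : a ∈ (((range k').finsuppAntidiag 0)).filter (fun a => ∀ t ∈ range k', r ∣ a t) :=
        Finset.mem_filter.mpr ⟨ha.1, ha.2.1⟩
      rw [h1, Finset.mem_singleton] at this
      exact ha.2.2 this
    rw [h1, h2]
    simp
  · have h2 : ((range k').finsuppAntidiag d).filter
        (fun a => (∀ t ∈ range k', r ∣ a t) ∧ a ≠ 0)
        = ((range k').finsuppAntidiag d).filter (fun a => ∀ t ∈ range k', r ∣ a t) := by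
      apply Finset.filter_congr
      intro a ha
      rw [Finset.mem_finsuppAntidiag] at ha
      have ha0 : a ≠ 0 := by
        rintro rfl
        exact hd (by simpa using ha.1.symm)
      simp [ha0]
    rw [h2, if_neg hd, sub_zero]

/-! ### Rows, levels and rebuilding -/

/-- The embedding `t ↦ (j, t)`. -/
def emb (j : ℕ) : ℕ ↪ ℕ × ℕ :=
  ⟨fun t => (j, t), fun a b h => by simpa using h⟩

/-- Row `j` of a coloured partition: the function `t ↦ c (j, t)`. -/
def rowOf (c : ℕ × ℕ →₀ ℕ) (j : ℕ) : ℕ →₀ ℕ :=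
  Finsupp.comapDomain (fun t => (j, t)) c (fun a _ b _ h => by simpa using h)

@[simp] lemma rowOf_apply (c : ℕ × ℕ →₀ ℕ) (j t : ℕ) : rowOf c j t = c (j, t) := rfl

/-- The top occupied level of a coloured partition. -/
def levelOf (c : ℕ × ℕ →₀ ℕ) : ℕ := (c.support.image Prod.fst).sup id

lemma apply_eq_zero_of_levelOf_lt {c : ℕ × ℕ →₀ ℕ} {j : ℕ} (h : levelOf c < j) (t : ℕ) :
    c (j, t) = 0 := by
  by_contra h0
  have hmem : (j, t) ∈ c.support := Finsupp.mem_support_iff.mpr h0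
  have hj : j ∈ c.support.image Prod.fst := Finset.mem_image.mpr ⟨(j, t), hmem, rfl⟩
  have h2 : j ≤ levelOf c := Finset.le_sup (f := id) hj
  omega

lemma rowOf_eq_zero_of_levelOf_lt {c : ℕ × ℕ →₀ ℕ} {j : ℕ} (h : levelOf c < j) :
    rowOf c j = 0 := by
  ext t
  simpa using apply_eq_zero_of_levelOf_lt h t

/-- Build a coloured partition from rows `0, …, i`. -/
def build (i : ℕ) (rows : ℕ → (ℕ →₀ ℕ)) : ℕ × ℕ →₀ ℕ :=
  ∑ j ∈ range (i + 1), Finsupp.embDomain (emb j) (rows j)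

lemma build_apply (i : ℕ) (rows : ℕ → (ℕ →₀ ℕ)) (j t : ℕ) :
    build i rows (j, t) = if j ≤ i then rows j t else 0 := by
  classical
  rw [build, Finset.sum_apply']
  have hterm : ∀ j' ∈ range (i + 1),
      Finsupp.embDomain (emb j') (rows j') (j, t)
        = if j' = j then rows j' t else 0 := by
    intro j' _
    by_cases hjj : j' = j
    · subst hjj
      rw [if_pos rfl]
      exact Finsupp.embDomain_apply_self (emb j') (rows j') t
    · rw [if_neg hjj]
      apply Finsupp.embDomain_notin_range
      rintro ⟨a, ha⟩
      exact hjj (congrArg Prod.fst ha)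
  rw [Finset.sum_congr rfl hterm, Finset.sum_ite_eq' (range (i + 1)) j (fun j' => rows j' t)]
  simp [Nat.lt_succ_iff]

lemma build_levelOf (c : ℕ × ℕ →₀ ℕ) : build (levelOf c) (rowOf c) = c := by
  ext p
  obtain ⟨j, t⟩ := p
  rw [build_apply]
  by_cases hj : j ≤ levelOf c
  · simp [hj]
  · rw [if_neg hj]
    exact (apply_eq_zero_of_levelOf_lt (by omega) t).symm

lemma build_sum (m i : ℕ) (rows : ℕ → (ℕ →₀ ℕ)) :
    (build i rows).sum (fun p v => v * m ^ p.1)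
      = ∑ j ∈ range (i + 1), ((rows j).sum fun _ v => v) * m ^ j := by
  rw [build, ← Finsupp.sum_finsetSum_index (h := fun (p : ℕ × ℕ) (v : ℕ) => v * m ^ p.1)
    (fun _ => zero_mul _) (fun _ x y => add_mul x y _)]
  refine Finset.sum_congr rfl fun j _ => ?_
  rw [Finsupp.sum_embDomain, Finsupp.sum_mul]
  simp only [emb, Function.Embedding.coeFn_mk]
  rfl

/-- The total weight at each level, as a finsupp. -/
def lOf (m : ℕ) (c : ℕ × ℕ →₀ ℕ) : ℕ →₀ ℕ :=
  Finsupp.onFinset (range (levelOf c + 1))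
    (fun j => ((rowOf c j).sum fun _ v => v) * m ^ j)
    (fun j hj => Finset.mem_range.mpr (by
      by_contra hlt
      exact hj (by
        show ((rowOf c j).sum fun _ v => v) * m ^ j = 0
        rw [rowOf_eq_zero_of_levelOf_lt (by omega : levelOf c < j)]
        simp)))

@[simp] lemma lOf_apply (m : ℕ) (c : ℕ × ℕ →₀ ℕ) (j : ℕ) :
    lOf m c j = ((rowOf c j).sum fun _ v => v) * m ^ j := rfl

/-- The data extracted from a coloured partition: its top level, level weights,
and scaled rows. -/
def dataOf (m : ℕ) (c : ℕ × ℕ →₀ ℕ) :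
    (i : ℕ) × ((_l : ℕ →₀ ℕ) × (∀ j ∈ range (i + 1), ℕ →₀ ℕ)) :=
  ⟨levelOf c, lOf m c, fun j _ => (m ^ j) • rowOf c j⟩

/-- The target finset for a fixed top level `i`. -/
def Tset (m : ℕ) (k : ℕ → ℕ) (n i : ℕ) :
    Finset ((_l : ℕ →₀ ℕ) × (∀ j ∈ range (i + 1), ℕ →₀ ℕ)) :=
  ((range (i + 1)).finsuppAntidiag n).sigma
    (fun l => (range (i + 1)).pi (fun j => Cset (m ^ j) (k j) (l j)))

lemma coeff_P (m : ℕ) (k : ℕ → ℕ) (G : ℕ → PowerSeries ℤ)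
    (hcoeff : ∀ j d, PowerSeries.coeff (R := ℤ) d (G (m ^ j)) = if m ^ j ∣ d then 1 else 0)
    (n i : ℕ) :
    PowerSeries.coeff (R := ℤ) n (∏ j ∈ range (i + 1), ((G (m ^ j)) ^ k j - 1))
      = (Tset m k n i).card := by
  classical
  rw [PowerSeries.coeff_prod]
  have h1 : ∀ l ∈ (range (i + 1)).finsuppAntidiag n,
      (∏ j ∈ range (i + 1), PowerSeries.coeff (R := ℤ) (l j) ((G (m ^ j)) ^ k j - 1))
        = (((range (i + 1)).pi (fun j => Cset (m ^ j) (k j) (l j))).card : ℤ) := by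
    intro l _
    rw [Finset.prod_congr rfl (fun j _ => coeff_F (G (m ^ j)) (m ^ j) (hcoeff j) (k j) (l j)),
      Finset.card_pi]
    push_cast
    rfl
  rw [Finset.sum_congr rfl h1, Tset, Finset.card_sigma]
  push_cast
  rfl

/-! ### The forward map lands in the target finset -/

lemma dataOf_mem (m : ℕ) (hm : 2 ≤ m) (k : ℕ → ℕ) (n N : ℕ)
    (hn : 1 ≤ n) (hN : n < m ^ (N + 1)) {c : ℕ × ℕ →₀ ℕ}
    (hc : IsColouredMaryPartition m k n c) (hg : WithoutGaps c) :
    dataOf m c ∈ (range (N + 1)).sigma (fun i => Tset m k n i) := by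
  classical
  obtain ⟨hcol, hsum⟩ := hc
  have hc0 : c ≠ 0 := by
    rintro rfl
    simp [Finsupp.sum_zero_index] at hsum
    omega
  set i := levelOf c with hi
  -- every level `j ≤ i` is occupied
  have hJmem : ∀ j, j ∈ c.support.image Prod.fst ↔ ∃ t, c (j, t) ≠ 0 := by
    intro j
    simp only [Finset.mem_image, Finsupp.mem_support_iff]
    constructor
    · rintro ⟨⟨j', t⟩, h1, rfl⟩; exact ⟨t, h1⟩
    · rintro ⟨t, ht⟩; exact ⟨(j, t), ht, rfl⟩
  have hJne : (c.support.image Prod.fst).Nonempty :=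
    (Finsupp.support_nonempty_iff.mpr hc0).image _
  have hiJ : ∃ t, c (i, t) ≠ 0 := by
    obtain ⟨b, hb, he⟩ := Finset.exists_mem_eq_sup _ hJne (id : ℕ → ℕ)
    have hib : i = b := he
    rw [hib]
    exact (hJmem b).mp hb
  have hstep : ∀ j, (∃ t, c (j + 1, t) ≠ 0) → ∃ t, c (j, t) ≠ 0 := by
    intro j ⟨t, ht⟩
    obtain ⟨t', ht'⟩ := hg j ⟨t, Nat.pos_of_ne_zero ht⟩
    exact ⟨t', by omega⟩
  have hdown : ∀ s j, (∃ t, c (j + s, t) ≠ 0) → ∃ t, c (j, t) ≠ 0 := by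
    intro s
    induction s with
    | zero => intro j h; simpa using h
    | succ s ihs =>
      intro j h
      have : ∃ t, c ((j + 1) + s, t) ≠ 0 := by
        have : (j + 1) + s = j + (s + 1) := by omega
        rwa [this]
      exact hstep j (ihs (j + 1) this)
  have hJall : ∀ j, j ≤ i → ∃ t, c (j, t) ≠ 0 := by
    intro j hj
    apply hdown (i - j) j
    have : j + (i - j) = i := by omega
    rw [this]
    exact hiJ
  -- `m ^ i ≤ n`
  have hin : m ^ i ≤ n := by
    obtain ⟨t, ht⟩ := hiJ
    have hmem : (i, t) ∈ c.support := Finsupp.mem_support_iff.mpr ht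
    have hle : c (i, t) * m ^ i ≤ c.sum (fun p v => v * m ^ p.1) := by
      rw [Finsupp.sum]
      exact Finset.single_le_sum (f := fun p => c p * m ^ p.1)
        (fun p _ => Nat.zero_le _) hmem
    calc m ^ i = 1 * m ^ i := (one_mul _).symm
      _ ≤ c (i, t) * m ^ i :=
          Nat.mul_le_mul_right _ (Nat.one_le_iff_ne_zero.mpr ht)
      _ ≤ n := by rwa [hsum] at hle
  have hiN : i < N + 1 := by
    have h1 : m ^ i < m ^ (N + 1) := lt_of_le_of_lt hin hN
    exact (Nat.pow_lt_pow_iff_right (by omega)).mp h1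
  have hrow_supp : ∀ j, (rowOf c j).support ⊆ range (k j) := by
    intro j t ht
    rw [Finsupp.mem_support_iff, rowOf_apply] at ht
    rw [Finset.mem_range]
    by_contra hkt
    exact ht (hcol j t (by omega))
  refine Finset.mem_sigma.mpr ⟨Finset.mem_range.mpr hiN, Finset.mem_sigma.mpr ⟨?_, ?_⟩⟩
  · -- the level weights form an antidiagonal element
    show lOf m c ∈ (range (i + 1)).finsuppAntidiag n
    rw [Finset.mem_finsuppAntidiag]
    refine ⟨?_, Finsupp.support_onFinset_subset⟩
    have hbs := build_sum m i (rowOf c)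
    rw [show build i (rowOf c) = c from build_levelOf c, hsum] at hbs
    rw [hbs]
    exact Finset.sum_congr rfl fun j _ => lOf_apply m c j
  · -- each scaled row is in the corresponding `Cset`
    show (fun j (_ : j ∈ range (i + 1)) => (m ^ j) • rowOf c j)
      ∈ (range (i + 1)).pi (fun j => Cset (m ^ j) (k j) (lOf m c j))
    rw [Finset.mem_pi]
    intro j hj
    rw [Cset, Finset.mem_filter, Finset.mem_finsuppAntidiag]
    have hsmul_apply : ∀ t, ((m ^ j) • rowOf c j) t = m ^ j * c (j, t) := by
      intro t
      rw [Finsupp.smul_apply, rowOf_apply, smul_eq_mul]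
    refine ⟨⟨?_, ?_⟩, ?_, ?_⟩
    · -- sum over colours equals `lOf m c j`
      rw [lOf_apply]
      have h1 : ∑ t ∈ range (k j), ((m ^ j) • rowOf c j) t
          = ∑ t ∈ range (k j), m ^ j * (rowOf c j) t := by
        refine Finset.sum_congr rfl fun t _ => ?_
        rw [hsmul_apply t]; rfl
      rw [h1, ← Finset.mul_sum]
      have h2 : ∑ t ∈ range (k j), (rowOf c j) t = (rowOf c j).sum fun _ v => v :=
        (Finsupp.sum_of_support_subset _ (hrow_supp j) (fun _ v => v) (fun _ _ => rfl)).symm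
      rw [h2, mul_comm]
    · exact (Finsupp.support_smul).trans (hrow_supp j)
    · intro t _
      rw [hsmul_apply t]
      exact Dvd.intro _ rfl
    · -- nonzero since level `j ≤ i` is occupied
      obtain ⟨t, ht⟩ := hJall j (by rw [Finset.mem_range] at hj; omega)
      intro h0
      have := congrArg (fun f => f t) h0
      simp only [hsmul_apply t, Finsupp.coe_zero, Pi.zero_apply] at this
      exact ht (by
        have hm0 : m ^ j ≠ 0 := (Nat.pow_pos (n := j) (by omega)).ne'
        exact (Nat.mul_eq_zero.mp this).resolve_left hm0)

/-! ### Injectivity -/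

lemma dataOf_inj (m : ℕ) (hm : 2 ≤ m) {c c' : ℕ × ℕ →₀ ℕ}
    (h : dataOf m c = dataOf m c') : c = c' := by
  have h1 : levelOf c = levelOf c' := congrArg Sigma.fst h
  rw [dataOf, dataOf] at h
  -- extract equality of the scaled-row functions
  have h2 : HEq
      (⟨lOf m c, fun j _ => (m ^ j) • rowOf c j⟩ :
        (_l : ℕ →₀ ℕ) × (∀ j ∈ range (levelOf c + 1), ℕ →₀ ℕ))
      (⟨lOf m c', fun j _ => (m ^ j) • rowOf c' j⟩ :
        (_l : ℕ →₀ ℕ) × (∀ j ∈ range (levelOf c' + 1), ℕ →₀ ℕ)) :=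
    (Sigma.mk.inj_iff.mp h).2
  rw [h1] at h2
  have h3 := eq_of_heq h2
  have h4 : (fun (j : ℕ) (_ : j ∈ range (levelOf c' + 1)) => (m ^ j) • rowOf c j)
      = (fun (j : ℕ) (_ : j ∈ range (levelOf c' + 1)) => (m ^ j) • rowOf c' j) :=
    eq_of_heq (Sigma.mk.inj_iff.mp h3).2
  have hrow : ∀ j, rowOf c j = rowOf c' j := by
    intro j
    by_cases hj : j ≤ levelOf c'
    · have := congrFun (congrFun h4 j) (Finset.mem_range.mpr (by omega))
      ext t
      have ht := congrArg (fun f => f t) this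
      simp only [Finsupp.smul_apply, smul_eq_mul] at ht
      exact Nat.eq_of_mul_eq_mul_left (Nat.pow_pos (n := j) (by omega)) ht
    · rw [rowOf_eq_zero_of_levelOf_lt (by omega : levelOf c' < j),
        rowOf_eq_zero_of_levelOf_lt (by rw [h1]; omega : levelOf c < j)]
  calc c = build (levelOf c) (rowOf c) := (build_levelOf c).symm
    _ = build (levelOf c') (rowOf c') := by rw [h1, funext hrow]
    _ = c' := build_levelOf c'

/-! ### Surjectivity -/

lemma dataOf_surj (m : ℕ) (hm : 2 ≤ m) (k : ℕ → ℕ) (n N : ℕ)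
    (x : (i : ℕ) × ((_l : ℕ →₀ ℕ) × (∀ j ∈ range (i + 1), ℕ →₀ ℕ)))
    (hx : x ∈ (range (N + 1)).sigma (fun i => Tset m k n i)) :
    ∃ c : ℕ × ℕ →₀ ℕ, (IsColouredMaryPartition m k n c ∧ WithoutGaps c)
      ∧ dataOf m c = x := by
  classical
  obtain ⟨i, l, f⟩ := x
  rw [Finset.mem_sigma] at hx
  obtain ⟨-, hx⟩ := hx
  rw [Tset, Finset.mem_sigma, Finset.mem_finsuppAntidiag, Finset.mem_pi] at hx
  obtain ⟨⟨hlsum, hlsupp⟩, hf⟩ := hx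
  -- the rows, obtained by dividing out `m ^ j`
  set rows : ℕ → (ℕ →₀ ℕ) := fun j =>
    if h : j < i + 1 then
      Finsupp.mapRange (· / m ^ j) (Nat.zero_div _) (f j (Finset.mem_range.mpr h))
    else 0 with hrows
  have hmpos : ∀ j : ℕ, 0 < m ^ j := fun j => Nat.pow_pos (n := j) (by omega)
  -- facts about `f j hj` from membership in `Cset`
  have key : ∀ (j : ℕ) (hj : j < i + 1),
      (f j (Finset.mem_range.mpr hj)).support ⊆ range (k j)
      ∧ (∑ t ∈ range (k j), f j (Finset.mem_range.mpr hj) t) = l j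
      ∧ (∀ t, m ^ j ∣ f j (Finset.mem_range.mpr hj) t)
      ∧ f j (Finset.mem_range.mpr hj) ≠ 0 := by
    intro j hj
    have := hf j (Finset.mem_range.mpr hj)
    rw [Cset, Finset.mem_filter, Finset.mem_finsuppAntidiag] at this
    obtain ⟨⟨hsum, hsupp⟩, hdvd, hne⟩ := this
    refine ⟨hsupp, hsum, fun t => ?_, hne⟩
    by_cases ht : t ∈ range (k j)
    · exact hdvd t ht
    · have : f j (Finset.mem_range.mpr hj) t = 0 := by
        rw [← Finsupp.notMem_support_iff]
        exact fun hmem => ht (hsupp hmem)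
      rw [this]
      exact dvd_zero _
  have hsmul : ∀ (j : ℕ) (hj : j < i + 1),
      (m ^ j) • rows j = f j (Finset.mem_range.mpr hj) := by
    intro j hj
    ext t
    rw [Finsupp.smul_apply, hrows]
    simp only [hj, dif_pos, Finsupp.mapRange_apply, smul_eq_mul]
    exact Nat.mul_div_cancel' ((key j hj).2.2.1 t)
  have hrows_apply : ∀ (j : ℕ) (hj : j < i + 1) (t : ℕ),
      m ^ j * rows j t = f j (Finset.mem_range.mpr hj) t := by
    intro j hj t
    have := congrArg (fun g => g t) (hsmul j hj)
    simpa [Finsupp.smul_apply] using this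
  have hrows_sum : ∀ (j : ℕ), j < i + 1 → ((rows j).sum fun _ v => v) * m ^ j = l j := by
    intro j hj
    have h1 : m ^ j * ((rows j).sum fun _ v => v)
        = ((m ^ j) • rows j).sum fun _ v => v := by
      rw [Finsupp.sum_smul_index (fun _ => rfl), Finsupp.mul_sum]
    rw [mul_comm, h1, hsmul j hj]
    have h2 : (f j (Finset.mem_range.mpr hj)).sum (fun _ v => v)
        = ∑ t ∈ range (k j), f j (Finset.mem_range.mpr hj) t :=
      Finsupp.sum_of_support_subset _ (key j hj).1 _ (fun _ _ => rfl)
    rw [h2, (key j hj).2.1]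
  have hrows_ne : ∀ (j : ℕ), j < i + 1 → rows j ≠ 0 := by
    intro j hj h0
    have := hsmul j hj
    rw [h0, smul_zero] at this
    exact (key j hj).2.2.2 this.symm
  set c : ℕ × ℕ →₀ ℕ := build i rows with hc
  have hc_apply : ∀ j t, c (j, t) = if j ≤ i then rows j t else 0 := fun j t =>
    build_apply i rows j t
  -- `c` is a coloured partition
  have hcol : ∀ j t, k j ≤ t → c (j, t) = 0 := by
    intro j t hkt
    rw [hc_apply]
    by_cases hj : j ≤ i
    · rw [if_pos hj]
      have hj' : j < i + 1 := by omega
      have := hrows_apply j hj' t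
      have hft : f j (Finset.mem_range.mpr hj') t = 0 := by
        rw [← Finsupp.notMem_support_iff]
        intro hmem
        have := (key j hj').1 hmem
        rw [Finset.mem_range] at this
        omega
      rw [hft] at this
      exact (Nat.mul_eq_zero.mp this).resolve_left (by have := hmpos j; omega)
    · rw [if_neg hj]
  have hcsum : c.sum (fun p v => v * m ^ p.1) = n := by
    rw [hc, build_sum]
    rw [Finset.sum_congr rfl (fun j hj => hrows_sum j (Finset.mem_range.mp hj))]
    exact hlsum
  have hgaps : WithoutGaps c := by
    intro j ⟨t, ht⟩
    rw [hc_apply] at ht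
    by_cases hj : j + 1 ≤ i
    swap
    · rw [if_neg hj] at ht; omega
    rw [if_pos hj] at ht
    have hj' : j < i + 1 := by omega
    obtain ⟨t', ht'⟩ := Finsupp.ne_iff.mp (hrows_ne j hj')
    refine ⟨t', ?_⟩
    rw [hc_apply, if_pos (by omega)]
    simpa using Nat.pos_of_ne_zero (by simpa using ht')
  -- rows of `c` agree with `rows`
  have hrowOf : ∀ j, rowOf c j = rows j := by
    intro j
    ext t
    rw [rowOf_apply, hc_apply]
    by_cases hj : j ≤ i
    · rw [if_pos hj]
    · rw [if_neg hj, hrows]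
      simp only [show ¬ (j < i + 1) by omega, dif_neg, not_false_iff]
      rfl
  -- the level of `c` is `i`
  have hlev : levelOf c = i := by
    apply le_antisymm
    · apply Finset.sup_le
      intro j hj
      rw [Finset.mem_image] at hj
      obtain ⟨⟨j', t⟩, hmem, rfl⟩ := hj
      rw [Finsupp.mem_support_iff] at hmem
      by_contra hgt
      simp only [id] at hgt
      rw [hc_apply, if_neg (by omega)] at hmem
      exact hmem rfl
    · obtain ⟨t, ht⟩ := Finsupp.ne_iff.mp (hrows_ne i (by omega))
      have hct : c (i, t) ≠ 0 := by
        rw [hc_apply, if_pos le_rfl]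
        simpa using ht
      have : i ∈ c.support.image Prod.fst :=
        Finset.mem_image.mpr ⟨(i, t), Finsupp.mem_support_iff.mpr hct, rfl⟩
      exact Finset.le_sup (f := id) this
  refine ⟨c, ⟨⟨hcol, hcsum⟩, hgaps⟩, ?_⟩
  -- now show `dataOf m c = ⟨i, l, f⟩`
  clear_value rows c
  subst hlev
  rw [dataOf]
  have hlOf : lOf m c = l := by
    ext j
    rw [lOf_apply, hrowOf]
    by_cases hj : j < levelOf c + 1
    · exact hrows_sum j hj
    · rw [hrows]
      simp only [hj, dif_neg, not_false_iff]
      have hlj : l j = 0 := by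
        rw [← Finsupp.notMem_support_iff]
        intro hmem
        have h5 : j ∈ range (levelOf c + 1) := hlsupp hmem
        rw [Finset.mem_range] at h5
        omega
      rw [hlj]
      simp
  have hfun : (fun (j : ℕ) (_ : j ∈ range (levelOf c + 1)) => (m ^ j) • rowOf c j)
      = f := by
    funext j hj
    rw [hrowOf]
    exact hsmul j (Finset.mem_range.mp hj)
  rw [hlOf, hfun]

end

end GapfreeAux

/-- Fix `m ≥ 2` and positive `k₀, k₁, …`.  For `n ≥ 1` and any `N` with
`m^{N+1} > n`, the number `c_m^k(n)` of `k`-coloured `m`-ary partitions of `n` without gaps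
equals the coefficient of `q^n` in `∑_{i=0}^{N} ∏_{j=0}^{i} (G_{m^j}^{k_j} - 1) ∈ ℤ⟦q⟧`,
where `G r` is the inverse of `1 - q^r` in `ℤ⟦q⟧`. -/
theorem gapfree_count_eq_coeff (m : ℕ) (hm : 2 ≤ m) (k : ℕ → ℕ) (hk : ∀ j, 0 < k j)
    (G : ℕ → PowerSeries ℤ) (hG : ∀ r, 1 ≤ r → (1 - X ^ r) * G r = 1)
    (n N : ℕ) (hn : 1 ≤ n) (hN : n < m ^ (N + 1)) :
    (Nat.card {c : ℕ × ℕ →₀ ℕ // IsColouredMaryPartition m k n c ∧ WithoutGaps c} : ℤ)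
      = PowerSeries.coeff (R := ℤ) n
          (∑ i ∈ range (N + 1), ∏ j ∈ range (i + 1), ((G (m ^ j)) ^ k j - 1)) := by
  classical
  have hcoeff : ∀ j d, PowerSeries.coeff (R := ℤ) d (G (m ^ j)) = if m ^ j ∣ d then 1 else 0 :=
    fun j d => GapfreeAux.coeffG G hG (m ^ j) (Nat.pow_pos (n := j) (by omega)) d
  -- right-hand side: coefficient of the sum
  rw [map_sum]
  rw [Finset.sum_congr rfl (fun i _ => GapfreeAux.coeff_P m k G hcoeff n i)]
  rw [← Nat.cast_sum, ← Finset.card_sigma]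
  -- left-hand side: count via the bijection
  congr 1
  set U := (range (N + 1)).sigma (fun i => GapfreeAux.Tset m k n i) with hU
  have e : {c : ℕ × ℕ →₀ ℕ // IsColouredMaryPartition m k n c ∧ WithoutGaps c}
      ≃ {x // x ∈ U} := by
    refine Equiv.ofBijective
      (fun c => ⟨GapfreeAux.dataOf m c.1,
        GapfreeAux.dataOf_mem m hm k n N hn hN c.2.1 c.2.2⟩) ⟨?_, ?_⟩
    · intro c c' h
      apply Subtype.ext
      exact GapfreeAux.dataOf_inj m hm (congrArg Subtype.val h)
    · rintro ⟨x, hx⟩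
      obtain ⟨c, hc, hdata⟩ := GapfreeAux.dataOf_surj m hm k n N x hx
      exact ⟨⟨c, hc⟩, Subtype.ext hdata⟩
  rw [Nat.card_congr e, Nat.card_eq_finsetCard]
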